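/- Let N = k n = k^t q with k ≥ 2, t ≥ 1, and suppose gcd(q/g, g) = 1 where g = gcd(q,k). Define ψ(A) = A_0 + ... + A_{t-1} + (A_t mod g) using base-k digits. Then for every ℓ ∈ {0,...,n-1}, the multiset {ψ(ℓ+in) : 0 ≤ i ≤ k-1} equals the multiset {ψ(kℓ+i) : 0 ≤ i ≤ k-1}. -/

import Mathlib

lemma core_perm (k q b : ℕ) (hk : 0 < k) (hq : 0 < q)
    (hco : Nat.Coprime (q / Nat.gcd q k) (Nat.gcd q k)) :
    (Finset.range k).val.map
      (fun i => (b + i * q) % k + (b + i * q) / k % Nat.gcd q k) =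
    (Finset.range k).val.map (fun i => b % Nat.gcd q k + i) := by
  set g := Nat.gcd q k with hg
  have hgk : g ∣ k := Nat.gcd_dvd_right q k
  have hgq : g ∣ q := Nat.gcd_dvd_left q k
  have hgpos : 0 < g := Nat.gcd_pos_of_pos_left _ hq
  obtain ⟨k', hk'⟩ := hgk
  obtain ⟨q', hq'⟩ := hgq
  have hgk : g ∣ k := ⟨k', hk'⟩
  have hgq : g ∣ q := ⟨q', hq'⟩
  have hkg : k / g = k' := by rw [hk', Nat.mul_div_cancel_left _ hgpos]
  have hqg : q / g = q' := by rw [hq', Nat.mul_div_cancel_left _ hgpos]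
  have hco' : Nat.Coprime q' g := hqg ▸ hco
  have hk'pos : 0 < k' := by
    rcases Nat.eq_zero_or_pos k' with h | h
    · rw [h, mul_zero] at hk'; omega
    · exact h
  set σ : ℕ → ℕ := fun i => ((b + i * q) % k - b % g) + (b + i * q) / k % g with hσ
  -- residues of r_i mod g are constant
  have hr : ∀ i, ((b + i * q) % k) % g = b % g := by
    intro i
    rw [Nat.mod_mod_of_dvd _ hgk, hq', show i * (g * q') = i * q' * g by ring,
      Nat.add_mul_mod_self_right]
  have hle : ∀ i, b % g ≤ (b + i * q) % k := fun i => (hr i) ▸ Nat.mod_le _ g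
  have hF : ∀ i, (b + i * q) % k + (b + i * q) / k % g = b % g + σ i := by
    intro i
    have := hle i
    simp only [hσ]
    omega
  -- σ maps range k into range k
  have hσlt : ∀ i, σ i < k := by
    intro i
    have h1 : (b + i * q) % k < k := Nat.mod_lt _ hk
    have h2 : (b + i * q) / k % g < g := Nat.mod_lt _ hgpos
    have h3 := hr i
    have h4 : (b + i * q) % k / g < k' := by
      rw [← hkg]; exact Nat.div_lt_div_of_lt_of_dvd ⟨k', hk'⟩ h1
    have h6 : g * ((b + i * q) % k / g) + b % g = (b + i * q) % k := by
      conv_rhs => rw [← Nat.div_add_mod ((b + i * q) % k) g]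
      rw [h3]
    have h7 : g * ((b + i * q) % k / g) + g ≤ k := by
      have h8 : (b + i * q) % k / g + 1 ≤ k' := h4
      calc g * ((b + i * q) % k / g) + g = g * ((b + i * q) % k / g + 1) := by ring
        _ ≤ g * k' := Nat.mul_le_mul_left g h8
        _ = k := hk'.symm
    simp only [hσ]
    omega
  -- injectivity
  have hinj : ∀ i < k, ∀ j < k, σ i = σ j → i = j := by
    have key : ∀ i j, i < k → j < k → i ≤ j → σ i = σ j → i = j := by
      intro i j hi hj hij heq
      -- recover r and s from σ
      have recov : ∀ a, σ a % g = (b + a * q) / k % g ∧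
          g * (σ a / g) + b % g = (b + a * q) % k := by
        intro a
        have h2 : (b + a * q) / k % g < g := Nat.mod_lt _ hgpos
        have h3 := hr a
        have h6 : g * ((b + a * q) % k / g) + b % g = (b + a * q) % k := by
          conv_rhs => rw [← Nat.div_add_mod ((b + a * q) % k) g]
          rw [h3]
        have hσa : σ a = g * ((b + a * q) % k / g) + (b + a * q) / k % g := by
          simp only [hσ]; omega
        constructor
        · rw [hσa, Nat.mul_add_mod, Nat.mod_eq_of_lt h2]
        · rw [hσa, Nat.mul_add_div hgpos, Nat.div_eq_of_lt h2, add_zero, h6]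
      obtain ⟨ri, si⟩ := recov i
      obtain ⟨rj, sj⟩ := recov j
      have hrm : (b + i * q) % k = (b + j * q) % k := by rw [← si, ← sj, heq]
      have hsm : (b + i * q) / k % g = (b + j * q) / k % g := by rw [← ri, ← rj, heq]
      -- from equal remainders: k ∣ (j - i) * q
      have hmeq : (b + i * q) ≡ (b + j * q) [MOD k] := by
        unfold Nat.ModEq; omega
      have hdvd : k ∣ (b + j * q) - (b + i * q) :=
        (Nat.modEq_iff_dvd' (by nlinarith)).mp hmeq
      have hsub : (b + j * q) - (b + i * q) = (j - i) * q := by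
        rw [Nat.sub_mul]; omega
      rw [hsub] at hdvd
      -- k' divides (j - i)
      have hcop' : Nat.Coprime q' k' := by
        have := Nat.coprime_div_gcd_div_gcd (m := q) (n := k) (hg ▸ hgpos)
        rwa [← hg, hkg, hqg] at this
      have hdvd2 : k' ∣ (j - i) * q' := by
        rcases hdvd with ⟨c, hc⟩
        refine ⟨c, ?_⟩
        apply Nat.eq_of_mul_eq_mul_left hgpos
        calc g * ((j - i) * q') = (j - i) * (g * q') := by ring
          _ = (j - i) * q := by rw [← hq']
          _ = k * c := hc
          _ = g * (k' * c) := by rw [hk']; ring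
      have hdvd3 : k' ∣ (j - i) :=
        (Nat.Coprime.dvd_of_dvd_mul_right (Nat.Coprime.symm hcop')) hdvd2
      obtain ⟨m, hm⟩ := hdvd3
      -- compute the shift in the s-value
      have hdivshift : (b + j * q) / k = (b + i * q) / k + m * q' := by
        have hji : j = i + k' * m := by omega
        have hj' : b + j * q = b + i * q + m * q' * k := by
          rw [hji, hq', hk']; ring
        rw [hj', Nat.add_mul_div_right _ _ hk]
      have hgdvd : g ∣ m * q' := by
        have h1 : (b + i * q) / k ≡ (b + i * q) / k + m * q' [MOD g] := by
          unfold Nat.ModEq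
          rw [← hdivshift]; exact hsm
        have := (Nat.modEq_iff_dvd' (Nat.le_add_right _ _)).mp h1
        simpa using this
      have hgm : g ∣ m := (Nat.Coprime.dvd_of_dvd_mul_right hco'.symm) hgdvd
      -- m must be 0
      by_contra hne
      have hmpos : 0 < m := by
        rcases Nat.eq_zero_or_pos m with h | h
        · rw [h, mul_zero] at hm; omega
        · exact h
      have hgle : g ≤ m := Nat.le_of_dvd hmpos hgm
      have : k ≤ j - i := by
        calc k = g * k' := hk'
          _ ≤ m * k' := Nat.mul_le_mul_right _ hgle
          _ = k' * m := mul_comm _ _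
          _ = j - i := hm.symm
      omega
    intro i hi j hj heq
    rcases Nat.le_total i j with h | h
    · exact key i j hi hj h heq
    · exact (key j i hj hi h heq.symm).symm
  -- σ permutes range k
  have himg : Finset.image σ (Finset.range k) = Finset.range k := by
    apply Finset.eq_of_subset_of_card_le
    · intro x hx
      obtain ⟨i, hi, rfl⟩ := Finset.mem_image.mp hx
      exact Finset.mem_range.mpr (hσlt i)
    · rw [Finset.card_range, Finset.card_image_of_injOn]
      · rw [Finset.card_range]
      · intro x hx y hy hxy
        exact hinj x (Finset.mem_range.mp hx) y (Finset.mem_range.mp hy) hxy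
  have hval : (Finset.range k).val.map σ = (Finset.range k).val := by
    have hnd : ((Finset.range k).val.map σ).Nodup := by
      apply Multiset.Nodup.map_on
      · intro x hx y hy hxy
        exact hinj x (Finset.mem_range.mp hx) y (Finset.mem_range.mp hy) hxy
      · exact (Finset.range k).nodup
    have himgval := Finset.image_val σ (Finset.range k)
    rw [Multiset.dedup_eq_self.mpr hnd] at himgval
    rw [← himgval, himg]
  have step1 : (Finset.range k).val.map
      (fun i => (b + i * q) % k + (b + i * q) / k % g)
      = ((Finset.range k).val.map σ).map (fun x => b % g + x) := by
    rw [Multiset.map_map]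
    exact Multiset.map_congr rfl (fun i _ => hF i)
  rw [step1, hval]

theorem column_block_weights_general (N n k t q : ℕ) (hk : 2 ≤ k) (ht : 1 ≤ t)
    (hq : 1 ≤ q) (hN : N = k ^ t * q) (hn : n = k ^ (t - 1) * q)
    (g : ℕ) (hg : g = Nat.gcd q k) (hco : Nat.Coprime (q / g) g)
    (ψ : ℕ → ℕ)
    (hψ : ∀ A, ψ A = (∑ i ∈ Finset.range t, A / k ^ i % k) + (A / k ^ t % k) % g) :
    ∀ ℓ < n,
      (Finset.range k).val.map (fun i => ψ (ℓ + i * n)) =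
      (Finset.range k).val.map (fun i => ψ (k * ℓ + i)) := by
  intro ℓ hℓ
  subst hg hn
  obtain ⟨t', rfl⟩ : ∃ t', t = t' + 1 := ⟨t - 1, by omega⟩
  simp only [Nat.add_sub_cancel] at hℓ ⊢
  have hk0 : 0 < k := by omega
  have hq0 : 0 < q := hq
  have hgk : Nat.gcd q k ∣ k := Nat.gcd_dvd_right q k
  -- compute ψ (k * ℓ + i) for i < k
  have hA : ∀ i, i < k → ψ (k * ℓ + i)
      = (∑ m ∈ Finset.range t', ℓ / k ^ m % k) + (ℓ / k ^ t' % Nat.gcd q k + i) := by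
    intro i hi
    have hdiv : (k * ℓ + i) / k = ℓ := by
      rw [Nat.mul_add_div hk0, Nat.div_eq_of_lt hi, add_zero]
    have hpow : ∀ m : ℕ, (k * ℓ + i) / k ^ (m + 1) = ℓ / k ^ m := by
      intro m
      rw [pow_succ', ← Nat.div_div_eq_div_mul, hdiv]
    rw [hψ, Finset.sum_range_succ']
    have h0 : (k * ℓ + i) / k ^ 0 % k = i := by
      rw [pow_zero, Nat.div_one, Nat.mul_add_mod, Nat.mod_eq_of_lt hi]
    have hsum : ∑ m ∈ Finset.range t', (k * ℓ + i) / k ^ (m + 1) % k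
        = ∑ m ∈ Finset.range t', ℓ / k ^ m % k := by
      apply Finset.sum_congr rfl
      intro m _
      rw [hpow]
    rw [h0, hsum, hpow t', Nat.mod_mod_of_dvd _ hgk]
    omega
  -- compute ψ (ℓ + i * n) for i < k
  have hB : ∀ i, i < k → ψ (ℓ + i * (k ^ t' * q))
      = (∑ m ∈ Finset.range t', ℓ / k ^ m % k)
        + ((ℓ / k ^ t' + i * q) % k + (ℓ / k ^ t' + i * q) / k % Nat.gcd q k) := by
    intro i hi
    have hdigit : ∀ m, m ≤ t' → (ℓ + i * (k ^ t' * q)) / k ^ m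
        = ℓ / k ^ m + i * q * k ^ (t' - m) := by
      intro m hm
      have h1 : ℓ + i * (k ^ t' * q) = ℓ + i * q * k ^ (t' - m) * k ^ m := by
        rw [show i * q * k ^ (t' - m) * k ^ m = i * (k ^ (t' - m) * k ^ m * q) by ring,
          ← pow_add, Nat.sub_add_cancel hm]
      rw [h1, Nat.add_mul_div_right _ _ (pow_pos hk0 m)]
    have hsum : ∑ m ∈ Finset.range t', (ℓ + i * (k ^ t' * q)) / k ^ m % k
        = ∑ m ∈ Finset.range t', ℓ / k ^ m % k := by
      apply Finset.sum_congr rfl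
      intro m hm
      have hm' : m < t' := Finset.mem_range.mp hm
      rw [hdigit m (le_of_lt hm')]
      have h2 : i * q * k ^ (t' - m) = i * q * k ^ (t' - m - 1) * k := by
        have h3 : t' - m = (t' - m - 1) + 1 := by omega
        conv_lhs => rw [h3]
        rw [pow_succ]
        ring
      rw [h2, Nat.add_mul_mod_self_right]
    have htop : (ℓ + i * (k ^ t' * q)) / k ^ t' = ℓ / k ^ t' + i * q := by
      rw [hdigit t' le_rfl, Nat.sub_self, pow_zero, mul_one]
    have htop1 : (ℓ + i * (k ^ t' * q)) / k ^ (t' + 1) = (ℓ / k ^ t' + i * q) / k := by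
      rw [pow_succ, ← Nat.div_div_eq_div_mul, htop]
    rw [hψ, Finset.sum_range_succ, hsum, htop, htop1, Nat.mod_mod_of_dvd _ hgk]
    omega
  have key := core_perm k q (ℓ / k ^ t') hk0 hq0 hco
  have stepL : (Finset.range k).val.map (fun i => ψ (ℓ + i * (k ^ t' * q)))
      = ((Finset.range k).val.map
          (fun i => (ℓ / k ^ t' + i * q) % k + (ℓ / k ^ t' + i * q) / k % Nat.gcd q k)).map
          (fun x => (∑ m ∈ Finset.range t', ℓ / k ^ m % k) + x) := by
    rw [Multiset.map_map]
    apply Multiset.map_congr rfl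
    intro i hi
    exact hB i (Finset.mem_range.mp hi)
  have stepR : (Finset.range k).val.map (fun i => ψ (k * ℓ + i))
      = ((Finset.range k).val.map (fun i => ℓ / k ^ t' % Nat.gcd q k + i)).map
          (fun x => (∑ m ∈ Finset.range t', ℓ / k ^ m % k) + x) := by
    rw [Multiset.map_map]
    apply Multiset.map_congr rfl
    intro i hi
    exact hA i (Finset.mem_range.mp hi)
  rw [stepL, stepR, key]
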